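/- Suppose a, b, c are positive and all odd, and suppose the Jacobi symbols satisfy (-bc | a) = 1, (-ac | b) = 1, and (-ab | c) = 1. Then (a-1)/2, (b-1)/2, and (c-1)/2 all have the same parity; equivalently, a ≡ b ≡ c (mod 4). -/

import Mathlib

open ZMod

private theorem stmt19_aux (a b c : ℤ) (ha : a ≠ 0) (hb : b ≠ 0) (hc : c ≠ 0)
    (hab : IsCoprime a b) (hac : IsCoprime a c) (hbc : IsCoprime b c)
    (hapos : 0 < a) (hbpos : 0 < b) (hcpos : 0 < c)
    (hoa : Odd a) (hob : Odd b) (hoc : Odd c)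
    (hja : jacobiSym (-b * c) a.natAbs = 1)
    (hjb : jacobiSym (-a * c) b.natAbs = 1)
    (hjc : jacobiSym (-a * b) c.natAbs = 1) :
    a.natAbs % 4 = b.natAbs % 4 ∧ b.natAbs % 4 = c.natAbs % 4 := by
  set A := a.natAbs with hA
  set B := b.natAbs with hB
  set C := c.natAbs with hC
  have haA : ((A : ℤ)) = a := Int.natAbs_of_nonneg hapos.le
  have hbB : ((B : ℤ)) = b := Int.natAbs_of_nonneg hbpos.le
  have hcC : ((C : ℤ)) = c := Int.natAbs_of_nonneg hcpos.le
  have hoA : Odd A := Int.natAbs_odd.mpr hoa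
  have hoB : Odd B := Int.natAbs_odd.mpr hob
  have hoC : Odd C := Int.natAbs_odd.mpr hoc
  have gab : Nat.Coprime A B := Int.isCoprime_iff_gcd_eq_one.mp hab
  have gac : Nat.Coprime A C := Int.isCoprime_iff_gcd_eq_one.mp hac
  have gbc : Nat.Coprime B C := Int.isCoprime_iff_gcd_eq_one.mp hbc
  rw [show (-b*c : ℤ) = -1 * (B:ℤ) * (C:ℤ) by rw [hbB, hcC]; ring,
    jacobiSym.mul_left, jacobiSym.mul_left, jacobiSym.at_neg_one hoA] at hja
  rw [show (-a*c : ℤ) = -1 * (A:ℤ) * (C:ℤ) by rw [haA, hcC]; ring,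
    jacobiSym.mul_left, jacobiSym.mul_left, jacobiSym.at_neg_one hoB] at hjb
  rw [show (-a*b : ℤ) = -1 * (A:ℤ) * (B:ℤ) by rw [haA, hbB]; ring,
    jacobiSym.mul_left, jacobiSym.mul_left, jacobiSym.at_neg_one hoC] at hjc
  have hx : jacobiSym (B:ℤ) A = 1 ∨ jacobiSym (B:ℤ) A = -1 := by
    apply jacobiSym.eq_one_or_neg_one
    rw [Int.gcd_natCast_natCast]; exact gab.symm
  have hy : jacobiSym (C:ℤ) A = 1 ∨ jacobiSym (C:ℤ) A = -1 := by
    apply jacobiSym.eq_one_or_neg_one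
    rw [Int.gcd_natCast_natCast]; exact gac.symm
  have hz : jacobiSym (C:ℤ) B = 1 ∨ jacobiSym (C:ℤ) B = -1 := by
    apply jacobiSym.eq_one_or_neg_one
    rw [Int.gcd_natCast_natCast]; exact gbc.symm
  have hA4 : A % 4 = 1 ∨ A % 4 = 3 := Nat.odd_mod_four_iff.mp (Nat.odd_iff.mp hoA)
  have hB4 : B % 4 = 1 ∨ B % 4 = 3 := Nat.odd_mod_four_iff.mp (Nat.odd_iff.mp hoB)
  have hC4 : C % 4 = 1 ∨ C % 4 = 3 := Nat.odd_mod_four_iff.mp (Nat.odd_iff.mp hoC)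
  rcases hA4 with hA4 | hA4 <;> rcases hB4 with hB4 | hB4 <;> rcases hC4 with hC4 | hC4
  all_goals {
    first
      | (rw [χ₄_nat_one_mod_four hA4] at hja) | (rw [χ₄_nat_three_mod_four hA4] at hja)
    first
      | (rw [χ₄_nat_one_mod_four hB4] at hjb) | (rw [χ₄_nat_three_mod_four hB4] at hjb)
    first
      | (rw [χ₄_nat_one_mod_four hC4] at hjc) | (rw [χ₄_nat_three_mod_four hC4] at hjc)
    first
      | (rw [jacobiSym.quadratic_reciprocity_one_mod_four hA4 hoB] at hjb)
      | (rw [jacobiSym.quadratic_reciprocity_one_mod_four' hoA hB4] at hjb)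
      | (rw [jacobiSym.quadratic_reciprocity_three_mod_four hA4 hB4] at hjb)
    first
      | (rw [jacobiSym.quadratic_reciprocity_one_mod_four hA4 hoC] at hjc)
      | (rw [jacobiSym.quadratic_reciprocity_one_mod_four' hoA hC4] at hjc)
      | (rw [jacobiSym.quadratic_reciprocity_three_mod_four hA4 hC4] at hjc)
    first
      | (rw [jacobiSym.quadratic_reciprocity_one_mod_four hB4 hoC] at hjc)
      | (rw [jacobiSym.quadratic_reciprocity_one_mod_four' hoB hC4] at hjc)
      | (rw [jacobiSym.quadratic_reciprocity_three_mod_four hB4 hC4] at hjc)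
    rcases hx with hx | hx <;> rcases hy with hy | hy <;> rcases hz with hz | hz <;>
      simp only [hx, hy, hz] at hja hjb hjc <;> omega
  }



theorem stmt19 (a b c : ℤ) (ha : a ≠ 0) (hb : b ≠ 0) (hc : c ≠ 0)
    (hsa : Squarefree a) (hsb : Squarefree b) (hsc : Squarefree c)
    (hab : IsCoprime a b) (hac : IsCoprime a c) (hbc : IsCoprime b c)
    (hapos : 0 < a) (hbpos : 0 < b) (hcpos : 0 < c)
    (hoa : Odd a) (hob : Odd b) (hoc : Odd c)
    (hja : jacobiSym (-b * c) a.natAbs = 1)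
    (hjb : jacobiSym (-a * c) b.natAbs = 1)
    (hjc : jacobiSym (-a * b) c.natAbs = 1) :
    ((a - 1) / 2 ≡ (b - 1) / 2 [ZMOD 2] ∧ (b - 1) / 2 ≡ (c - 1) / 2 [ZMOD 2]) ∧
    (a ≡ b [ZMOD 4] ∧ b ≡ c [ZMOD 4]) := by
  obtain ⟨k1, k2⟩ := stmt19_aux a b c ha hb hc hab hac hbc hapos hbpos hcpos hoa hob hoc hja hjb hjc
  have haA : ((a.natAbs : ℤ)) = a := Int.natAbs_of_nonneg hapos.le
  have hbB : ((b.natAbs : ℤ)) = b := Int.natAbs_of_nonneg hbpos.le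
  have hcC : ((c.natAbs : ℤ)) = c := Int.natAbs_of_nonneg hcpos.le
  refine ⟨⟨?_, ?_⟩, ?_, ?_⟩ <;> show _ % _ = _ % _ <;> omega
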